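/- Let n ≥ 3 be an integer and α > 0, and define u_α : ℝⁿ → ℝ by u_α(x) = (α/(|x|² + α²))^{(n−2)/2}. Then ∫_{ℝⁿ} |∇u_α(x)|² dx = n(n−2) · ∫_{ℝⁿ} u_α(x)^{2n/(n−2)} dx, both integrals being finite. -/

import Mathlib

open MeasureTheory Set Filter Real Topology

private lemma bubble_aux_cont (α : ℝ) (hα : 0 < α) (k l : ℕ) :
    Continuous (fun r : ℝ => r ^ k / (r ^ 2 + α ^ 2) ^ l) := by
  apply Continuous.div (by fun_prop) (by fun_prop)
  intro x; positivity

private lemma bubble_aux_int (α : ℝ) (hα : 0 < α) (k l : ℕ) (hkl : k + 2 ≤ 2 * l) :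
    IntegrableOn (fun r : ℝ => r ^ k / (r ^ 2 + α ^ 2) ^ l) (Ioi 0) := by
  rw [← Ioc_union_Ioi_eq_Ioi (zero_le_one' ℝ)]
  apply IntegrableOn.union
  · exact ((bubble_aux_cont α hα k l).continuousOn).integrableOn_compact isCompact_Icc
      |>.mono_set Ioc_subset_Icc_self
  · have hb : IntegrableOn (fun t : ℝ => t ^ ((k : ℝ) - 2 * l)) (Ioi 1) :=
      integrableOn_Ioi_rpow_of_lt (by
        have h2 : ((k+2:ℕ):ℝ) ≤ ((2*l:ℕ):ℝ) := Nat.cast_le.mpr hkl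
        push_cast at h2; linarith) one_pos
    apply hb.mono' ((bubble_aux_cont α hα k l).aestronglyMeasurable.restrict)
    filter_upwards [ae_restrict_mem measurableSet_Ioi] with x hx
    have hx1 : (1:ℝ) ≤ x := le_of_lt hx
    have hx0 : (0:ℝ) < x := by linarith
    rw [Real.norm_of_nonneg (by positivity), Real.rpow_sub hx0,
      Real.rpow_natCast, show ((2:ℝ)*l) = ((2*l : ℕ):ℝ) by push_cast; ring, Real.rpow_natCast]
    apply div_le_div_of_nonneg_left (by positivity) (by positivity)
    calc x ^ (2*l) = (x^2)^l := by rw [pow_mul]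
    _ ≤ (x^2 + α^2)^l := by gcongr; nlinarith

private lemma bubble_aux_deriv (α : ℝ) (hα : 0 < α) (m : ℕ) (r : ℝ) :
    HasDerivAt (fun r : ℝ => r ^ (m+3) / (r ^ 2 + α ^ 2) ^ (m+2))
      (-((m:ℝ)+1) * (r ^ (m+2) / (r^2+α^2)^(m+2))
        + 2*((m:ℝ)+2)*α^2 * (r^(m+2)/(r^2+α^2)^(m+3))) r := by
  have hd : (0:ℝ) < r^2 + α^2 := by positivity
  have h1 : HasDerivAt (fun r : ℝ => r ^ (m+3)) (((m:ℝ)+3) * r ^ (m+2)) r := by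
    simpa using hasDerivAt_pow (m+3) r
  have h2 : HasDerivAt (fun r : ℝ => (r ^ 2 + α ^ 2) ^ (m+2))
      (((m:ℝ)+2) * (r^2+α^2)^(m+1) * (2*r)) r := by
    have := ((hasDerivAt_pow 2 r).add_const (α^2)).fun_pow (m+2)
    simpa using this
  have := h1.fun_div h2 (by positivity)
  refine this.congr_deriv ?_
  field_simp
  ring

private lemma bubble_aux_key (α : ℝ) (hα : 0 < α) (m : ℕ) :
    ((m:ℝ)+1) * ∫ r in Ioi (0:ℝ), r^(m+2)/(r^2+α^2)^(m+2)
      = 2*((m:ℝ)+2)*α^2 * ∫ r in Ioi (0:ℝ), r^(m+2)/(r^2+α^2)^(m+3) := by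
  have hg := bubble_aux_int α hα (m+2) (m+2) (by omega)
  have hh := bubble_aux_int α hα (m+2) (m+3) (by omega)
  have hint : IntegrableOn (fun r : ℝ =>
      -((m:ℝ)+1) * (r ^ (m+2) / (r^2+α^2)^(m+2))
        + 2*((m:ℝ)+2)*α^2 * (r^(m+2)/(r^2+α^2)^(m+3))) (Ioi 0) :=
    (hg.const_mul _).add (hh.const_mul _)
  have hG0 : Tendsto (fun r : ℝ => r ^ (m+3) / (r ^ 2 + α ^ 2) ^ (m+2)) atTop (𝓝 0) := by
    apply squeeze_zero' (g := fun r : ℝ => (r ^ (m+1))⁻¹)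
    · filter_upwards [eventually_ge_atTop (1:ℝ)] with r hr
      positivity
    · filter_upwards [eventually_ge_atTop (1:ℝ)] with r hr
      have hr0 : (0:ℝ) < r := by linarith
      rw [div_le_iff₀ (by positivity), inv_mul_eq_div, le_div_iff₀ (by positivity),
        ← pow_add]
      calc r ^ (m+3+(m+1)) = (r^2)^(m+2) := by rw [← pow_mul]; ring_nf
      _ ≤ (r^2+α^2)^(m+2) := by gcongr; nlinarith
    · exact (tendsto_pow_atTop (by omega)).inv_tendsto_atTop
  have hI := integral_Ioi_of_hasDerivAt_of_tendsto
    (f := fun r : ℝ => r ^ (m+3) / (r ^ 2 + α ^ 2) ^ (m+2))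
    ((Continuous.div (by fun_prop) (by fun_prop) (fun x => by positivity) :
        Continuous fun r : ℝ => r ^ (m+3) / (r ^ 2 + α ^ 2) ^ (m+2))).continuousWithinAt
    (fun x _ => bubble_aux_deriv α hα m x) hint hG0
  rw [integral_add (hg.const_mul _) (hh.const_mul _), integral_const_mul,
    integral_const_mul] at hI
  have h0 : (0:ℝ) ^ (m+3) / ((0:ℝ) ^ 2 + α ^ 2) ^ (m+2) = 0 := by simp
  rw [h0] at hI
  linarith

private lemma bubble_aux_intE (m : ℕ) (α : ℝ) (hα : 0 < α) (j k : ℕ)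
    (hjk : m + 4 + j ≤ 2*k) :
    Integrable (fun x : EuclideanSpace ℝ (Fin (m+3)) => ‖x‖^j / (‖x‖^2+α^2)^k) := by
  set K : ℝ := 2*(1+(α^2)⁻¹) with hKdef
  have hK : 0 < K := by positivity
  have hfr : ((Module.finrank ℝ (EuclideanSpace ℝ (Fin (m+3))) : ℝ)) < ((m:ℝ)+4) := by
    rw [finrank_euclideanSpace_fin]; push_cast; linarith
  have hb : Integrable (fun x : EuclideanSpace ℝ (Fin (m+3)) =>
      K^k * (1+‖x‖) ^ (-((m:ℝ)+4))) := (integrable_one_add_norm hfr).const_mul _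
  refine hb.mono' ?_ (ae_of_all _ ?_)
  · exact (Continuous.div (by fun_prop) (by fun_prop)
      (fun x => by positivity)).aestronglyMeasurable
  · intro x
    have h0 : (0:ℝ) ≤ ‖x‖ := norm_nonneg x
    have hd : (0:ℝ) < ‖x‖^2 + α^2 := by positivity
    have hrp : ((1:ℝ)+‖x‖) ^ (-((m:ℝ)+4)) = ((1+‖x‖)^(m+4))⁻¹ := by
      rw [← Real.rpow_natCast (1+‖x‖) (m+4), ← Real.rpow_neg (by positivity)]
      norm_num
    rw [Real.norm_of_nonneg (by positivity), hrp, ← div_eq_mul_inv,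
      div_le_div_iff₀ (by positivity) (by positivity)]
    have hsq : ((1:ℝ)+‖x‖)^2 ≤ K*(‖x‖^2+α^2) := by
      have hc : α^2 * (α^2)⁻¹ = 1 := mul_inv_cancel₀ (by positivity)
      have hinv : (0:ℝ) ≤ (α^2)⁻¹ := by positivity
      rw [hKdef]
      nlinarith [sq_nonneg (‖x‖-1), sq_nonneg ‖x‖, mul_nonneg hinv (sq_nonneg ‖x‖)]
    calc ‖x‖^j*(1+‖x‖)^(m+4) ≤ (1+‖x‖)^j * (1+‖x‖)^(m+4) := by
          gcongr; linarith
      _ = (1+‖x‖)^(j+(m+4)) := by rw [← pow_add]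
      _ ≤ (1+‖x‖)^(2*k) := pow_le_pow_right₀ (by linarith) (by omega)
      _ = ((1+‖x‖)^2)^k := by rw [← pow_mul]
      _ ≤ (K*(‖x‖^2+α^2))^k := pow_le_pow_left₀ (by positivity) hsq k
      _ = K^k*(‖x‖^2+α^2)^k := mul_pow _ _ _

private lemma bubble_gradsq (m : ℕ) (α : ℝ) (hα : 0 < α)
    (u : EuclideanSpace ℝ (Fin (m+3)) → ℝ)
    (hu : ∀ x, u x = (α / (‖x‖ ^ 2 + α ^ 2)) ^ ((((m+3 : ℕ) : ℝ) - 2) / 2)) :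
    ∀ x, ‖gradient u x‖^2
      = ((m:ℝ)+1)^2 * α^(m+1) * ‖x‖^2 / (‖x‖^2+α^2)^(m+3) := by
  intro x
  set t : ℝ := ‖x‖^2 with ht
  have hd : (0:ℝ) < t + α^2 := by positivity
  have hs : (0:ℝ) < α * (t + α^2)⁻¹ := by positivity
  set c : ℝ := (((m+3 : ℕ) : ℝ) - 2) / 2 with hc
  have hc' : c = ((m:ℝ)+1)/2 := by rw [hc]; push_cast; ring
  have hlin : HasDerivAt (fun s : ℝ => s + α^2) 1 t := (hasDerivAt_id t).add_const _
  have hinv : HasDerivAt (fun s : ℝ => (s + α^2)⁻¹) (-1 / (t+α^2)^2) t := by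
    simpa using hlin.fun_inv (ne_of_gt hd)
  have hS : HasDerivAt (fun s : ℝ => α * (s + α^2)⁻¹) (α * (-1 / (t+α^2)^2)) t :=
    hinv.const_mul α
  set D : ℝ := α * (-1 / (t+α^2)^2) * c * (α * (t+α^2)⁻¹) ^ (c - 1) with hD
  have hphi : HasDerivAt (fun s : ℝ => (α * (s + α^2)⁻¹) ^ c) D t :=
    hS.rpow_const (Or.inl (ne_of_gt hs))
  have hq : HasFDerivAt (fun y : EuclideanSpace ℝ (Fin (m+3)) => ‖y‖^2)
      (2 • (innerSL ℝ x)) x := (hasStrictFDerivAt_norm_sq x).hasFDerivAt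
  have hcomp := hphi.comp_hasFDerivAt x hq
  have huf : ((fun s : ℝ => (α * (s + α^2)⁻¹) ^ c) ∘
      fun y : EuclideanSpace ℝ (Fin (m+3)) => ‖y‖^2) = u := by
    funext y
    rw [Function.comp_apply, hu y, div_eq_mul_inv]
  rw [huf] at hcomp
  have hgrad : HasGradientAt u ((D * 2) • x) x := by
    rw [hasGradientAt_iff_hasFDerivAt]
    refine hcomp.congr_fderiv ?_
    ext y
    simp [InnerProductSpace.toDual_apply_apply, real_inner_smul_left]
    ring
  rw [hgrad.gradient]
  rw [norm_smul]
  rw [mul_pow, Real.norm_eq_abs, sq_abs]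
  have h2 : ((α * (t+α^2)⁻¹) ^ (c-1))^2 = (α * (t+α^2)⁻¹) ^ ((m:ℝ) - 1) := by
    rw [← Real.rpow_natCast ((α * (t+α^2)⁻¹) ^ (c-1)) 2, ← Real.rpow_mul hs.le]
    congr 1
    rw [hc']; push_cast; ring
  have h3 : (α * (t+α^2)⁻¹) ^ ((m:ℝ) - 1)
      = (α * (t+α^2)⁻¹)^m / (α * (t+α^2)⁻¹) := by
    rw [Real.rpow_sub hs, Real.rpow_one, Real.rpow_natCast]
  have hαne : α ≠ 0 := ne_of_gt hα
  have hdne : t + α^2 ≠ 0 := ne_of_gt hd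
  rw [hD, mul_pow, mul_pow, mul_pow, h2, h3, hc']
  rw [mul_pow]
  field_simp
  rw [div_pow, ← ht]
  field_simp
  ring

private lemma bubble_pow (m : ℕ) (α : ℝ) (hα : 0 < α)
    (u : EuclideanSpace ℝ (Fin (m+3)) → ℝ)
    (hu : ∀ x, u x = (α / (‖x‖ ^ 2 + α ^ 2)) ^ ((((m+3 : ℕ) : ℝ) - 2) / 2)) :
    ∀ x, u x ^ ((2 * ((m+3 : ℕ) : ℝ)) / (((m+3 : ℕ) : ℝ) - 2))
      = α^(m+3) / (‖x‖^2+α^2)^(m+3) := by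
  intro x
  have hd : (0:ℝ) < ‖x‖^2 + α^2 := by positivity
  have hs : (0:ℝ) ≤ α / (‖x‖^2 + α^2) := by positivity
  rw [hu x, ← Real.rpow_mul hs]
  have he : (((m+3 : ℕ) : ℝ) - 2) / 2 * (2 * ((m+3 : ℕ) : ℝ) / (((m+3 : ℕ) : ℝ) - 2))
      = ((m+3 : ℕ) : ℝ) := by
    have h1 : ((m:ℝ)+1) ≠ 0 := by positivity
    push_cast
    rw [show (m:ℝ)+3-2 = (m:ℝ)+1 by ring]
    field_simp
  rw [he, Real.rpow_natCast, div_pow]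

/-- For the standard bubble `u_α` on `ℝⁿ`, `n ≥ 3`,
`∫ |∇u_α|² = n(n−2) ∫ u_α^(2n/(n−2))`, both integrals being finite. -/
theorem bubble_dirichlet_energy_eq
    (n : ℕ) (hn : 3 ≤ n) (α : ℝ) (hα : 0 < α)
    (u : EuclideanSpace ℝ (Fin n) → ℝ)
    (hu : ∀ x, u x = (α / (‖x‖ ^ 2 + α ^ 2)) ^ (((n : ℝ) - 2) / 2)) :
    Integrable (fun x => ‖gradient u x‖ ^ 2) ∧
    Integrable (fun x => u x ^ ((2 * (n : ℝ)) / ((n : ℝ) - 2))) ∧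
    (∫ x, ‖gradient u x‖ ^ 2)
      = (n : ℝ) * ((n : ℝ) - 2) * ∫ x, u x ^ ((2 * (n : ℝ)) / ((n : ℝ) - 2)) := by
  obtain ⟨m, rfl⟩ : ∃ m, n = m + 3 := ⟨n - 3, by omega⟩
  have hgs := bubble_gradsq m α hα u hu
  have hup := bubble_pow m α hα u hu
  have hL : (fun x : EuclideanSpace ℝ (Fin (m+3)) => ‖gradient u x‖ ^ 2)
      = fun x => ((m:ℝ)+1)^2 * α^(m+1) * ‖x‖^2 / (‖x‖^2+α^2)^(m+3) := funext hgs
  have hR : (fun x : EuclideanSpace ℝ (Fin (m+3)) =>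
        u x ^ ((2 * ((m+3 : ℕ) : ℝ)) / (((m+3 : ℕ) : ℝ) - 2)))
      = fun x => α^(m+3) / (‖x‖^2+α^2)^(m+3) := funext hup
  have hint1 : Integrable (fun x : EuclideanSpace ℝ (Fin (m+3)) =>
      ((m:ℝ)+1)^2 * α^(m+1) * ‖x‖^2 / (‖x‖^2+α^2)^(m+3)) := by
    have h := (bubble_aux_intE m α hα 2 (m+3) (by omega)).const_mul (((m:ℝ)+1)^2 * α^(m+1))
    refine h.congr ?_
    apply ae_of_all
    intro x
    simp only [← mul_div_assoc]
  have hint2 : Integrable (fun x : EuclideanSpace ℝ (Fin (m+3)) =>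
      α^(m+3) / (‖x‖^2+α^2)^(m+3)) := by
    have h := (bubble_aux_intE m α hα 0 (m+3) (by omega)).const_mul (α^(m+3))
    refine h.congr ?_
    apply ae_of_all
    intro x
    simp only [pow_zero, mul_one_div]
  refine ⟨by rw [hL]; exact hint1, by rw [hR] at *; exact hint2, ?_⟩
  rw [hL, hR]
  -- radial reduction
  have hI1 := integral_fun_norm_addHaar (volume : Measure (EuclideanSpace ℝ (Fin (m+3))))
    (fun r : ℝ => ((m:ℝ)+1)^2 * α^(m+1) * r^2 / (r^2+α^2)^(m+3))
  have hI2 := integral_fun_norm_addHaar (volume : Measure (EuclideanSpace ℝ (Fin (m+3))))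
    (fun r : ℝ => α^(m+3) / (r^2+α^2)^(m+3))
  rw [finrank_euclideanSpace_fin] at hI1 hI2
  simp only [nsmul_eq_mul, smul_eq_mul] at hI1 hI2
  rw [hI1, hI2]
  set V : ℝ := volume.real (Metric.ball (0 : EuclideanSpace ℝ (Fin (m+3))) 1)
  have hg := bubble_aux_int α hα (m+2) (m+2) (by omega)
  have hh := bubble_aux_int α hα (m+2) (m+3) (by omega)
  have hkey := bubble_aux_key α hα m
  set Ig : ℝ := ∫ r in Ioi (0:ℝ), r^(m+2)/(r^2+α^2)^(m+2) with hIg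
  set Ih : ℝ := ∫ r in Ioi (0:ℝ), r^(m+2)/(r^2+α^2)^(m+3) with hIh
  have e1 : (∫ y in Ioi (0:ℝ), y ^ (m+3-1) * (((m:ℝ)+1)^2 * α^(m+1) * y^2 / (y^2+α^2)^(m+3)))
      = ((m:ℝ)+1)^2 * α^(m+1) * (Ig - α^2 * Ih) := by
    have : ∀ y ∈ Ioi (0:ℝ), y ^ (m+3-1) * (((m:ℝ)+1)^2 * α^(m+1) * y^2 / (y^2+α^2)^(m+3))
        = ((m:ℝ)+1)^2 * α^(m+1)
            * (y^(m+2)/(y^2+α^2)^(m+2) - α^2 * (y^(m+2)/(y^2+α^2)^(m+3))) := by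
      intro y hy
      have hd : (0:ℝ) < y^2 + α^2 := by positivity
      rw [show m+3-1 = m+2 from rfl]
      field_simp
      ring
    rw [setIntegral_congr_fun measurableSet_Ioi this, integral_const_mul,
      integral_sub hg (hh.const_mul _), integral_const_mul]
  have e2 : (∫ y in Ioi (0:ℝ), y ^ (m+3-1) * (α^(m+3) / (y^2+α^2)^(m+3)))
      = α^(m+3) * Ih := by
    have : ∀ y ∈ Ioi (0:ℝ), y ^ (m+3-1) * (α^(m+3) / (y^2+α^2)^(m+3))
        = α^(m+3) * (y^(m+2)/(y^2+α^2)^(m+3)) := by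
      intro y hy
      have hd : (0:ℝ) < y^2 + α^2 := by positivity
      rw [show m+3-1 = m+2 from rfl]
      field_simp
    rw [setIntegral_congr_fun measurableSet_Ioi this, integral_const_mul]
  rw [e1, e2]
  push_cast
  linear_combination (((m:ℝ)+3) * V * ((m:ℝ)+1) * α^(m+1)) * hkey
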